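/- For every k ∈ (0,1), one has the strict inequality 2(E(k) - K(k)) + k²·K(k) < 0. -/
import Mathlib

open Real

/-- Complete elliptic integral of the first kind. -/
noncomputable def ellK (k : ℝ) : ℝ :=
  ∫ u in (0:ℝ)..(π/2), 1 / Real.sqrt (1 - k^2 * Real.sin u ^ 2)

/-- Complete elliptic integral of the second kind. -/
noncomputable def ellE (k : ℝ) : ℝ :=
  ∫ u in (0:ℝ)..(π/2), Real.sqrt (1 - k^2 * Real.sin u ^ 2)

theorem stmt_3 (k : ℝ) (hk : k ∈ Set.Ioo (0:ℝ) 1) :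
    2 * (ellE k - ellK k) + k^2 * ellK k < 0 := by
  obtain ⟨hk0, hk1⟩ := hk
  have hgpos : ∀ u : ℝ, 0 < 1 - k^2 * Real.sin u ^ 2 := by
    intro u
    nlinarith [Real.sin_sq_le_one u, sq_nonneg (Real.sin u), sq_nonneg k,
      mul_pos hk0 hk0]
  set s : ℝ → ℝ := fun u => Real.sqrt (1 - k^2 * Real.sin u ^ 2) with hs_def
  have hspos : ∀ u, 0 < s u := fun u => Real.sqrt_pos.mpr (hgpos u)
  have hcs : Continuous s := by
    apply Continuous.sqrt
    continuity
  have hcinv : Continuous fun u => 1 / s u :=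
    continuous_const.div hcs fun u => (hspos u).ne'
  set F : ℝ → ℝ := fun u => Real.cos (2 * u) / s u with hF_def
  have hcF : Continuous F :=
    (Real.continuous_cos.comp (continuous_const.mul continuous_id)).div hcs
      fun u => (hspos u).ne'
  have hsq : ∀ u, s u * s u = 1 - k^2 * Real.sin u ^ 2 :=
    fun u => Real.mul_self_sqrt (hgpos u).le
  -- Step 1: rewrite the LHS as k^2 * ∫ F
  have key : 2 * (ellE k - ellK k) + k^2 * ellK k
      = k^2 * ∫ u in (0:ℝ)..(π/2), F u := by
    have h1 : IntervalIntegrable (fun u => 2 * s u) MeasureTheory.volume 0 (π/2) :=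
      (continuous_const.mul hcs).intervalIntegrable _ _
    have h2 : IntervalIntegrable (fun u => (2 - k^2) * (1 / s u))
        MeasureTheory.volume 0 (π/2) :=
      (continuous_const.mul hcinv).intervalIntegrable _ _
    have hE : 2 * ellE k = ∫ u in (0:ℝ)..(π/2), 2 * s u := by
      rw [ellE, intervalIntegral.integral_const_mul]
    have hK : (2 - k^2) * ellK k = ∫ u in (0:ℝ)..(π/2), (2 - k^2) * (1 / s u) := by
      rw [ellK, intervalIntegral.integral_const_mul]
    have : 2 * (ellE k - ellK k) + k^2 * ellK k
        = 2 * ellE k - (2 - k^2) * ellK k := by ring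
    rw [this, hE, hK, ← intervalIntegral.integral_sub h1 h2,
      ← intervalIntegral.integral_const_mul]
    apply intervalIntegral.integral_congr
    intro u _
    have hsu := hspos u
    have hcos : Real.cos (2 * u) = 1 - 2 * Real.sin u ^ 2 := by
      rw [Real.cos_two_mul']
      nlinarith [Real.sin_sq_add_cos_sq u]
    simp only [F, hcos]
    field_simp
    nlinarith [hsq u]
  rw [key]
  have hJneg : (∫ u in (0:ℝ)..(π/2), F u) < 0 := by
    have hi1 : IntervalIntegrable F MeasureTheory.volume 0 (π/4) :=
      hcF.intervalIntegrable _ _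
    have hi2 : IntervalIntegrable F MeasureTheory.volume (π/4) (π/2) :=
      hcF.intervalIntegrable _ _
    rw [← intervalIntegral.integral_add_adjacent_intervals hi1 hi2]
    have hsubst : (∫ u in (π/4:ℝ)..(π/2), F u)
        = ∫ u in (0:ℝ)..(π/4), F (π/2 - u) := by
      rw [intervalIntegral.integral_comp_sub_left F (π/2)]
      congr 1 <;> ring
    rw [hsubst, ← intervalIntegral.integral_add hi1
      ((by fun_prop : Continuous fun u : ℝ => F (π/2 - u)).intervalIntegrable _ _)]
    have hneg : ∀ u ∈ Set.Ioo (0:ℝ) (π/4), 0 < -(F u + F (π/2 - u)) := by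
      intro u ⟨hu0, hu4⟩
      have hcospos : 0 < Real.cos (2 * u) := by
        apply Real.cos_pos_of_mem_Ioo
        constructor <;> [nlinarith [Real.pi_pos]; nlinarith [Real.pi_pos]]
      have hsincos : Real.sin u ^ 2 < Real.cos u ^ 2 := by
        have := Real.cos_two_mul' u
        nlinarith
      have hF2 : F (π/2 - u) = -Real.cos (2*u) / Real.sqrt (1 - k^2 * Real.cos u ^ 2) := by
        simp only [F, s]
        rw [Real.sin_pi_div_two_sub]
        congr 1
        have : 2 * (π/2 - u) = π - 2*u := by ring
        rw [this, Real.cos_pi_sub]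
      have hg2pos : 0 < 1 - k^2 * Real.cos u ^ 2 := by
        nlinarith [Real.cos_sq_le_one u, sq_nonneg k]
      have hlt : 1 - k^2 * Real.cos u ^ 2 < 1 - k^2 * Real.sin u ^ 2 := by
        nlinarith [mul_pos hk0 hk0]
      have hsqlt : Real.sqrt (1 - k^2 * Real.cos u ^ 2)
          < Real.sqrt (1 - k^2 * Real.sin u ^ 2) :=
        Real.sqrt_lt_sqrt hg2pos.le hlt
      have hsqrt2pos : 0 < Real.sqrt (1 - k^2 * Real.cos u ^ 2) :=
        Real.sqrt_pos.mpr hg2pos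
      have hdivlt : Real.cos (2*u) / s u < Real.cos (2*u) / Real.sqrt (1 - k^2 * Real.cos u ^ 2) :=
        div_lt_div_of_pos_left hcospos hsqrt2pos hsqlt
      rw [hF2]
      have : F u = Real.cos (2*u) / s u := rfl
      rw [this]
      rw [neg_div]
      linarith
    have hpos := intervalIntegral.intervalIntegral_pos_of_pos_on
      (f := fun u => -(F u + F (π/2 - u))) (a := 0) (b := π/4)
      ((by fun_prop : Continuous fun u : ℝ => -(F u + F (π/2 - u))).intervalIntegrable _ _)
      hneg (by positivity)
    rw [intervalIntegral.integral_neg] at hpos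
    linarith
  have : 0 < k^2 := by positivity
  nlinarith
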